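/- Let G be a finite connected simple graph, let W be a positive weight function on G (W(q) > 0 for every vertex q), let v0 be a vertex of G, and let D be a distribution on G such that D(s) ≤ W(s) for all vertices s ≠ v0. If V_{{v0}}(D) ≤ V_{{v0}}(W), then there exists a distribution D* on G that is derivable from D, is contained in W, and satisfies V_{{v0}}(D*) = V_{{v0}}(D). -/

import Mathlib

/-- A single pebbling move on graph `G`: remove two pebbles from a vertex `p`
(which must carry at least two pebbles) and add one pebble to an adjacent vertex `q`. -/
def PebblingMove {V : Type*} (G : SimpleGraph V) (D D' : V → ℕ) : Prop :=
  ∃ p q : V, G.Adj p q ∧ 2 ≤ D p ∧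
    D' p = D p - 2 ∧ D' q = D q + 1 ∧ ∀ s : V, s ≠ p → s ≠ q → D' s = D s

/-- `D'` is derivable from `D` by a (possibly empty) finite sequence of pebbling moves. -/
def Derivable {V : Type*} (G : SimpleGraph V) (D D' : V → ℕ) : Prop :=
  Relation.ReflTransGen (PebblingMove G) D D'

/-- `D` covers `W` if some distribution derivable from `D` contains `W`. -/
def Covers {V : Type*} (G : SimpleGraph V) (D W : V → ℕ) : Prop :=
  ∃ D' : V → ℕ, Derivable G D D' ∧ ∀ q : V, W q ≤ D' q

/-- The standard value `V_S(D) = ∑_q D(q) · 2^{d(q,S)}`, where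
`d(q,S) = min_{r ∈ S} d(q,r)`. -/
noncomputable def stdVal {V : Type*} [Fintype V] (G : SimpleGraph V) (S : Set V)
    (D : V → ℕ) : ℕ :=
  ∑ q : V, D q * 2 ^ sInf {d : ℕ | ∃ r ∈ S, G.dist q r = d}

/-- The stacking number `SN_W(G) = max_v ∑_u W(u) · 2^{d(u,v)}`. -/
noncomputable def SN {V : Type*} [Fintype V] (G : SimpleGraph V) (W : V → ℕ) : ℕ :=
  Finset.univ.sup fun v : V => ∑ u : V, W u * 2 ^ G.dist u v

section Aux

variable {V : Type*} [Fintype V] [DecidableEq V] (G : SimpleGraph V)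

lemma stdVal_singleton (v0 : V) (D : V → ℕ) :
    stdVal G {v0} D = ∑ q : V, D q * 2 ^ G.dist q v0 := by
  unfold stdVal
  refine Finset.sum_congr rfl fun q _ => ?_
  have h : {d : ℕ | ∃ r ∈ ({v0} : Set V), G.dist q r = d} = {G.dist q v0} := by
    ext d; simp [eq_comm]
  rw [h, csInf_singleton]

/-- A single pebbling move that increases the distance to `v0` by one:
it is a pebbling move and preserves the standard value. -/
lemma move_spec (v0 p r : V) (D : V → ℕ) (hadj : G.Adj p r) (h2 : 2 ≤ D p)
    (hd : G.dist r v0 = G.dist p v0 + 1) :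
    PebblingMove G D (fun s => if s = p then D p - 2 else if s = r then D r + 1 else D s) ∧
    stdVal G {v0} (fun s => if s = p then D p - 2 else if s = r then D r + 1 else D s)
      = stdVal G {v0} D := by
  have hpr : p ≠ r := hadj.ne
  set D' : V → ℕ := fun s => if s = p then D p - 2 else if s = r then D r + 1 else D s with hD'
  have hmove : PebblingMove G D D' := by
    refine ⟨p, r, hadj, h2, by simp [hD'], by simp [hD', hpr.symm], fun s hsp hsr => by
      simp [hD', hsp, hsr]⟩
  refine ⟨hmove, ?_⟩
  rw [stdVal_singleton, stdVal_singleton]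
  have hrmem : r ∈ Finset.univ.erase p := Finset.mem_erase.2 ⟨hpr.symm, Finset.mem_univ r⟩
  have key : ∀ f : V → ℕ, ∑ s : V, f s
      = f p + (f r + ∑ s ∈ (Finset.univ.erase p).erase r, f s) := by
    intro f
    rw [← Finset.add_sum_erase _ f (Finset.mem_univ p), ← Finset.add_sum_erase _ f hrmem]
  rw [key (fun q => D' q * 2 ^ G.dist q v0), key (fun q => D q * 2 ^ G.dist q v0)]
  have hcongr : ∑ q ∈ (Finset.univ.erase p).erase r, D' q * 2 ^ G.dist q v0
      = ∑ q ∈ (Finset.univ.erase p).erase r, D q * 2 ^ G.dist q v0 := by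
    refine Finset.sum_congr rfl fun q hq => ?_
    have hq1 := Finset.ne_of_mem_erase hq
    have hq2 := Finset.ne_of_mem_erase (Finset.mem_of_mem_erase hq)
    simp [hD', hq1, hq2]
  rw [hcongr]
  have h1 : D' p = D p - 2 := by simp [hD']
  have h2' : D' r = D r + 1 := by simp [hD', hpr.symm]
  rw [h1, h2', hd, pow_succ]
  obtain ⟨m, hm⟩ := Nat.exists_eq_add_of_le h2
  have hsub : D p - 2 = m := by omega
  rw [hsub, hm]
  ring

/-- Predecessor on a geodesic. -/
lemma exists_pred (hG : G.Connected) (v0 q : V) (k : ℕ) (h : G.dist v0 q = k + 1) :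
    ∃ b, G.Adj b q ∧ G.dist v0 b = k := by
  obtain ⟨w, hw⟩ := hG.exists_walk_length_eq_dist v0 q
  have hwr : w.reverse.length = k + 1 := by rw [SimpleGraph.Walk.length_reverse, hw, h]
  cases hwrv : w.reverse with
  | nil => rw [hwrv] at hwr; simp at hwr
  | cons hadj p =>
    rename_i b
    rw [hwrv] at hwr
    simp [SimpleGraph.Walk.length_cons] at hwr
    refine ⟨b, hadj.symm, ?_⟩
    have hcomm : G.dist v0 b = G.dist b v0 := SimpleGraph.dist_comm
    have hle : G.dist b v0 ≤ k := by
      have := SimpleGraph.dist_le p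
      omega
    have htri := hG.dist_triangle (u := v0) (v := b) (w := q)
    have hbq : G.dist b q ≤ 1 := by
      have := SimpleGraph.dist_le hadj.symm.toWalk
      simpa using this
    omega

/-- Push one pebble from `v0` to a vertex `q` at distance `k`, assuming every
vertex strictly closer than `q` (other than `v0`) carries a pebble. -/
lemma push (hG : G.Connected) (v0 : V) (D : V → ℕ) (k : ℕ) :
    ∀ q : V, G.dist v0 q = k → q ≠ v0 → 2 ≤ D v0 →
    (∀ s : V, s ≠ v0 → G.dist v0 s < k → 1 ≤ D s) →
    ∃ D' : V → ℕ, Derivable G D D' ∧ D' q = D q + 1 ∧ (∀ s, s ≠ q → D' s ≤ D s) ∧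
      (∀ s, s ≠ q → k ≤ G.dist v0 s → D' s = D s) ∧
      D' v0 = D v0 - 2 ∧ stdVal G {v0} D' = stdVal G {v0} D := by
  induction k with
  | zero =>
    intro q hq hqv0 _ _
    have := hG.pos_dist_of_ne (Ne.symm hqv0) (u := v0) (v := q)
    omega
  | succ k ih =>
    intro q hq hqv0 h2 hclose
    obtain ⟨b, hadj, hb⟩ := exists_pred G hG v0 q k hq
    have hbq : b ≠ q := hadj.ne
    by_cases hbv : b = v0
    · -- direct move from v0 to q
      have hadj' : G.Adj v0 q := hbv ▸ hadj
      have hk0 : k = 0 := by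
        rw [hbv] at hb
        rw [SimpleGraph.dist_self] at hb
        omega
      have hd : G.dist q v0 = G.dist v0 v0 + 1 := by
        rw [SimpleGraph.dist_self, SimpleGraph.dist_comm, hq, hk0]
      obtain ⟨hmove, hval⟩ := move_spec G v0 v0 q D hadj' h2 hd
      refine ⟨_, Relation.ReflTransGen.single hmove, by simp [hqv0], ?_, ?_,
        by simp [Ne.symm hqv0], hval⟩
      · intro s hs
        by_cases hsv : s = v0
        · simpa [hsv] using Nat.sub_le (D v0) 2
        · simp [hsv, hs]
      · intro s hs hds
        have hsv : s ≠ v0 := by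
          rintro rfl
          rw [SimpleGraph.dist_self] at hds; omega
        simp [hsv, hs]
    · -- recursive push to b, then move b → q
      have hDb : 1 ≤ D b := by
        refine hclose b hbv ?_
        rw [hb]; omega
      obtain ⟨D1, hder1, hD1b, hD1le, hD1far, hD1v0, hval1⟩ := ih b hb hbv h2
        (fun s hs hd => hclose s hs (by omega))
      have h2b : 2 ≤ D1 b := by omega
      have hd : G.dist q v0 = G.dist b v0 + 1 := by
        rw [SimpleGraph.dist_comm, hq, SimpleGraph.dist_comm (v := v0), hb]
      obtain ⟨hmove, hval⟩ := move_spec G v0 b q D1 hadj h2b hd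
      have hD1q : D1 q = D q := hD1far q hbq.symm (by omega)
      have hqv0' : q ≠ v0 := hqv0
      refine ⟨_, hder1.tail hmove, ?_, ?_, ?_, ?_, ?_⟩
      · simp [hbq.symm, hD1q]
      · intro s hs
        by_cases hsb : s = b
        · subst hsb
          simp only [hs, if_false, if_pos rfl]
          simp [hs]
          omega
        · simp [hsb, hs]; exact hD1le s hsb
      · intro s hs hds
        have hsb : s ≠ b := by
          rintro rfl; rw [hb] at hds; omega
        simp [hsb, hs]
        exact hD1far s hsb (by omega)
      · have hv0b : v0 ≠ b := Ne.symm hbv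
        simp [hv0b, Ne.symm hqv0']
        exact hD1v0
      · rw [hval, hval1]

/-- Main loop: reduce the pile at `v0` until it fits under `W`. -/
lemma main_loop (hG : G.Connected) (W : V → ℕ) (hW : ∀ q : V, 0 < W q) (v0 : V) :
    ∀ n : ℕ, ∀ D : V → ℕ, D v0 ≤ n → (∀ s : V, s ≠ v0 → D s ≤ W s) →
    stdVal G {v0} D ≤ stdVal G {v0} W →
    ∃ Dstar : V → ℕ, Derivable G D Dstar ∧ (∀ q : V, Dstar q ≤ W q) ∧
      stdVal G {v0} Dstar = stdVal G {v0} D := by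
  intro n
  induction n with
  | zero =>
    intro D hn hle _
    refine ⟨D, Relation.ReflTransGen.refl, fun q => ?_, rfl⟩
    by_cases hq : q = v0
    · subst hq; omega
    · exact hle q hq
  | succ n ih =>
    intro D hn hle hval
    by_cases hv0 : D v0 ≤ W v0
    · refine ⟨D, Relation.ReflTransGen.refl, fun q => ?_, rfl⟩
      by_cases hq : q = v0
      · subst hq; exact hv0
      · exact hle q hq
    · push_neg at hv0
      have h2 : 2 ≤ D v0 := by have := hW v0; omega
      -- there must be a deficient vertex
      have hdef : ∃ q : V, q ≠ v0 ∧ D q < W q := by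
        by_contra hcon
        push_neg at hcon
        have heq : ∀ s : V, s ≠ v0 → D s = W s := fun s hs =>
          le_antisymm (hle s hs) (hcon s hs)
        have hlt : stdVal G {v0} W < stdVal G {v0} D := by
          rw [stdVal_singleton, stdVal_singleton]
          refine Finset.sum_lt_sum (fun s _ => ?_) ⟨v0, Finset.mem_univ v0, ?_⟩
          · by_cases hs : s = v0
            · subst hs
              exact Nat.mul_le_mul_right _ hv0.le
            · rw [heq s hs]
          · have : (0:ℕ) < 2 ^ G.dist v0 v0 := Nat.pow_pos (by norm_num)
            exact (Nat.mul_lt_mul_right this).mpr hv0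
        omega
      -- pick a deficient vertex at minimal distance
      classical
      set T : Finset V := Finset.univ.filter (fun s => s ≠ v0 ∧ D s < W s) with hT
      have hTne : T.Nonempty := by
        obtain ⟨q, hq1, hq2⟩ := hdef
        exact ⟨q, by simp [hT, hq1, hq2]⟩
      obtain ⟨q, hqT, hqmin⟩ := T.exists_min_image (fun s => G.dist v0 s) hTne
      have hqprop : q ≠ v0 ∧ D q < W q := by simpa [hT] using hqT
      have hclose : ∀ s : V, s ≠ v0 → G.dist v0 s < G.dist v0 q → 1 ≤ D s := by
        intro s hs hds
        by_cases hsd : D s < W s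
        · have : s ∈ T := by simp [hT, hs, hsd]
          have := hqmin s this
          omega
        · push_neg at hsd
          have := hW s
          omega
      obtain ⟨D', hder, hD'q, hD'le, _, hD'v0, hval'⟩ :=
        push G hG v0 D (G.dist v0 q) q rfl hqprop.1 h2 hclose
      have hle' : ∀ s : V, s ≠ v0 → D' s ≤ W s := by
        intro s hs
        by_cases hsq : s = q
        · subst hsq; omega
        · exact le_trans (hD'le s hsq) (hle s hs)
      obtain ⟨Dstar, hderstar, hstarle, hstarval⟩ := ih D' (by omega) hle'
        (by rw [hval']; exact hval)
      exact ⟨Dstar, hder.trans hderstar, hstarle, by rw [hstarval, hval']⟩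

end Aux

/-- Lemma 3 of the paper: if W is positive, D ≤ W away from v0, and
V_{v0}(D) ≤ V_{v0}(W), then there is a distribution D* derivable from D,
contained in W, with V_{v0}(D*) = V_{v0}(D). -/
theorem exists_derivable_contained {V : Type*} [Fintype V] (G : SimpleGraph V)
    (hG : G.Connected) (W : V → ℕ) (hW : ∀ q : V, 0 < W q) (v0 : V) (D : V → ℕ)
    (hD : ∀ s : V, s ≠ v0 → D s ≤ W s)
    (hval : stdVal G {v0} D ≤ stdVal G {v0} W) :
    ∃ Dstar : V → ℕ, Derivable G D Dstar ∧ (∀ q : V, Dstar q ≤ W q) ∧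
      stdVal G {v0} Dstar = stdVal G {v0} D := by
  classical
  exact main_loop G hG W hW v0 (D v0) D le_rfl hD hval
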